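/- Let 0 < s, p < ∞ with sp > d, and let K ∈ ℕ satisfy 2^{sp+1}·(2^{p−1} ∨ 1)·2^{−K|sp−d|} ≤ 1. Set C(d,p,s,K) = 2^{sp+1+K(d ∧ sp)}·(2^{p−1} ∨ 1) / (1 − 2^{−d}). Then for every function u : ℤ₊^d → ℂ, one has ∑_{j ∈ ℤ₊^d, ‖j‖_∞ ≥ 2^K} |u(j)|^p / ‖j‖_∞^{sp} ≤ C(d,p,s,K) · ∑_{n=1}^{∞} ∑_{j ∈ A_n} ∑_{m ∈ A_{n+K}} |u(j) − u(m)|^p / 2^{(n+K)(d+sp)} + ∑_{j ∈ ℤ₊^d, 1 ≤ ‖j‖_∞ < 2^K} |u(j)|^p / ‖j‖_∞^{sp}. -/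

import Mathlib

open scoped ENNReal

/-- The sup-norm `‖x‖_∞` of a point of `ℤ₊^d`, as a real number. -/
noncomputable def nsup {d : ℕ} (x : Fin d → ℕ) : ℝ := ((Finset.univ.sup x : ℕ) : ℝ)

/-- The dyadic annulus `A_n ⊆ ℤ₊^d` for `n ≥ 1`:
points `j` with `2^(n-1) ≤ ‖j‖_∞ ≤ 2^n - 1`. -/
def Ann (d n : ℕ) : Set (Fin d → ℕ) :=
  {j | 2 ^ (n - 1) ≤ Finset.univ.sup j ∧ Finset.univ.sup j < 2 ^ n}

open scoped NNReal


lemma rpow_add_le_max {p : ℝ} (hp : 0 < p) (A B : ℝ) (hA : 0 ≤ A) (hB : 0 ≤ B) :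
    (A + B) ^ p ≤ max ((2:ℝ)^(p-1)) 1 * (A^p + B^p) := by
  lift A to ℝ≥0 using hA
  lift B to ℝ≥0 using hB
  rcases le_total 1 p with h1 | h1
  · have h := NNReal.coe_le_coe.2 (NNReal.rpow_add_le_mul_rpow_add_rpow A B h1)
    push_cast at h ⊢
    refine h.trans (mul_le_mul_of_nonneg_right (le_max_left _ _) (by positivity))
  · have h := NNReal.coe_le_coe.2 (NNReal.rpow_add_le_add_rpow A B hp.le h1)
    push_cast at h ⊢
    refine h.trans (le_mul_of_one_le_left (by positivity) (le_max_right _ _))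

lemma abs_rpow_triangle {p : ℝ} (hp : 0 < p) (x y : ℂ) :
    ‖x‖ ^ p ≤ max ((2:ℝ)^(p-1)) 1 * (‖x - y‖ ^ p + ‖y‖ ^ p) := by
  have h1 : ‖x‖ ≤ ‖x - y‖ + ‖y‖ := by
    simpa using norm_add_le (x - y) y
  calc ‖x‖ ^ p ≤ (‖x - y‖ + ‖y‖) ^ p :=
        Real.rpow_le_rpow (norm_nonneg _) h1 hp.le
    _ ≤ _ := rpow_add_le_max hp _ _ (norm_nonneg _) (norm_nonneg _)

def box (d n : ℕ) : Finset (Fin d → ℕ) := Fintype.piFinset fun _ => Finset.range n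

noncomputable def annF (d n : ℕ) : Finset (Fin d → ℕ) := box d (2^n) \ box d (2^(n-1))

lemma mem_box_sup {d n : ℕ} (hn : 0 < n) (j : Fin d → ℕ) :
    j ∈ box d n ↔ Finset.univ.sup j < n := by
  simp only [box, Fintype.mem_piFinset, Finset.mem_range]
  rw [Finset.sup_lt_iff (show (⊥:ℕ) < n from hn)]
  simp

lemma card_box (d n : ℕ) : (box d n).card = n ^ d := by
  simp [box, Finset.prod_const]

lemma mem_annF {d n : ℕ} (j : Fin d → ℕ) :
    j ∈ annF d n ↔ 2^(n-1) ≤ Finset.univ.sup j ∧ Finset.univ.sup j < 2^n := by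
  rw [annF, Finset.mem_sdiff, mem_box_sup (Nat.pow_pos two_pos),
    mem_box_sup (Nat.pow_pos two_pos)]
  simp only [not_lt]
  tauto

lemma card_annF (d n : ℕ) : (annF d n).card = 2^(n*d) - 2^((n-1)*d) := by
  rw [annF, Finset.card_sdiff_of_subset, card_box, card_box, pow_mul, pow_mul]
  intro j hj
  rw [mem_box_sup (Nat.pow_pos two_pos)] at *
  exact lt_of_lt_of_le hj (Nat.pow_le_pow_right two_pos (Nat.sub_le n 1))

lemma card_annF_real (d : ℕ) {a : ℕ} (ha : 1 ≤ a) :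
    ((annF d a).card : ℝ) = (2:ℝ) ^ ((a:ℝ)*(d:ℝ)) * (1 - (2:ℝ) ^ (-(d:ℝ))) := by
  have hle : 2^((a-1)*d) ≤ 2^(a*d) :=
    Nat.pow_le_pow_right two_pos (Nat.mul_le_mul_right d (Nat.sub_le a 1))
  have h1 : ((a-1:ℕ):ℝ) = (a:ℝ) - 1 := by
    push_cast [Nat.cast_sub ha]; ring
  rw [card_annF, Nat.cast_sub hle]
  push_cast
  rw [← Real.rpow_natCast 2 (a*d), ← Real.rpow_natCast 2 ((a-1)*d)]
  push_cast [h1]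
  rw [mul_sub, mul_one, ← Real.rpow_add two_pos]
  congr 2
  ring

lemma nsup_lb {d m : ℕ} (hm : 1 ≤ m) {j : Fin d → ℕ} (hj : j ∈ annF d m) :
    (2:ℝ) ^ ((m:ℝ) - 1) ≤ nsup j := by
  obtain ⟨h1, _⟩ := (mem_annF j).1 hj
  calc (2:ℝ) ^ ((m:ℝ)-1) = (2:ℝ) ^ (((m-1:ℕ)):ℝ) := by rw [Nat.cast_sub hm]; norm_num
    _ = ((2^(m-1):ℕ):ℝ) := by rw [Real.rpow_natCast]; push_cast; ring
    _ ≤ nsup j := by simp only [nsup]; exact_mod_cast h1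

lemma nsup_ub {d m : ℕ} {j : Fin d → ℕ} (hj : j ∈ annF d m) :
    nsup j ≤ (2:ℝ) ^ ((m:ℝ)) := by
  obtain ⟨_, h2⟩ := (mem_annF j).1 hj
  calc nsup j ≤ ((2^m : ℕ) : ℝ) := by simp only [nsup]; exact_mod_cast h2.le
    _ = (2:ℝ) ^ ((m:ℝ)) := by push_cast; exact (Real.rpow_natCast 2 m).symm

lemma nsup_nonneg {d : ℕ} (j : Fin d → ℕ) : 0 ≤ nsup j := by
  simp only [nsup]; positivity

lemma nsup_pos {d m : ℕ} (hm : 1 ≤ m) {j : Fin d → ℕ} (hj : j ∈ annF d m) :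
    0 < nsup j :=
  lt_of_lt_of_le (Real.rpow_pos_of_pos two_pos _) (nsup_lb hm hj)

noncomputable def Sr (d : ℕ) (s p : ℝ) (u : (Fin d → ℕ) → ℂ) (a : ℕ) : ℝ :=
  ∑ j ∈ annF d a, ‖u j‖ ^ p / nsup j ^ (s*p)

noncomputable def Dr (d K : ℕ) (s p : ℝ) (u : (Fin d → ℕ) → ℂ) (a : ℕ) : ℝ :=
  ∑ j ∈ annF d a, ∑ m ∈ annF d (a+K),
    ‖u j - u m‖ ^ p / (2:ℝ) ^ (((a+K : ℕ):ℝ) * ((d:ℝ) + s*p))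

lemma Sr_nonneg (d : ℕ) (s p : ℝ) (u : (Fin d → ℕ) → ℂ) (a : ℕ) : 0 ≤ Sr d s p u a := by
  refine Finset.sum_nonneg fun j _ => div_nonneg ?_ ?_
  · exact Real.rpow_nonneg (norm_nonneg _) _
  · exact Real.rpow_nonneg (nsup_nonneg j) _

lemma Dr_nonneg (d K : ℕ) (s p : ℝ) (u : (Fin d → ℕ) → ℂ) (a : ℕ) : 0 ≤ Dr d K s p u a := by
  refine Finset.sum_nonneg fun j _ => Finset.sum_nonneg fun x _ => div_nonneg ?_ ?_
  · exact Real.rpow_nonneg (norm_nonneg _) _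
  · positivity

lemma step (d K : ℕ) (s p : ℝ) (hd : 0 < d) (hp : 0 < p) (hσ : 0 < s * p)
    (hdσ : (d:ℝ) < s * p)
    (hK : (2:ℝ) ^ (s*p + 1) * max ((2:ℝ)^(p-1)) 1 * (2:ℝ) ^ (-(K:ℝ) * |s*p - (d:ℝ)|) ≤ 1)
    (u : (Fin d → ℕ) → ℂ) (a : ℕ) (ha : 1 ≤ a) :
    Sr d s p u (a+K) ≤
      (2:ℝ) ^ (s*p + 1 + (K:ℝ)*(d:ℝ)) * max ((2:ℝ)^(p-1)) 1 / (1 - (2:ℝ)^(-(d:ℝ))) / 2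
        * Dr d K s p u a + 1/2 * Sr d s p u a := by
  set σ := s * p with hσdef
  set L := max ((2:ℝ)^(p-1)) 1 with hLdef
  have hL1 : (1:ℝ) ≤ L := le_max_right _ _
  have hL0 : (0:ℝ) < L := lt_of_lt_of_le one_pos hL1
  set c : ℝ := 1 - (2:ℝ)^(-(d:ℝ)) with hcdef
  have h2d : (2:ℝ)^(-(d:ℝ)) < 1 := by
    exact Real.rpow_lt_one_of_one_lt_of_neg one_lt_two
      (neg_lt_zero.mpr (by exact_mod_cast hd))
  have hc0 : 0 < c := sub_pos.mpr h2d
  set m : ℕ := a + K with hmdef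
  have hm1 : 1 ≤ m := le_trans ha (Nat.le_add_right a K)
  set τ : ℝ := ((m:ℝ) - 1) * σ with hτdef
  set μ : ℝ := ((m:ℕ):ℝ) * ((d:ℝ) + σ) with hμdef
  set A := annF d a
  set B := annF d m
  set E : ℝ := ∑ j ∈ B, ∑ x ∈ A, ‖u j - u x‖ ^ p with hEdef
  set P : ℝ := ∑ x ∈ A, ‖u x‖ ^ p with hPdef
  set W : ℝ := ∑ j ∈ B, ‖u j‖ ^ p with hWdef
  set cA : ℝ := ((annF d a).card : ℝ) with hcAdef
  set cB : ℝ := ((annF d m).card : ℝ) with hcBdef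
  have hcA : cA = (2:ℝ) ^ ((a:ℝ)*(d:ℝ)) * c := card_annF_real d ha
  have hcB : cB = (2:ℝ) ^ ((m:ℝ)*(d:ℝ)) * c := card_annF_real d hm1
  have hcA0 : 0 < cA := by rw [hcA]; positivity
  have powpos : ∀ x : ℝ, (0:ℝ) < 2 ^ x := fun x => Real.rpow_pos_of_pos two_pos x
  have hEnn : 0 ≤ E := by apply Finset.sum_nonneg; intros; apply Finset.sum_nonneg; intros; positivity
  have hPnn : 0 ≤ P := by apply Finset.sum_nonneg; intros; positivity
  -- (1) Sr (a+K) ≤ W / 2^τ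
  have h1 : Sr d s p u m ≤ W / (2:ℝ)^τ := by
    rw [hWdef, Finset.sum_div]
    apply Finset.sum_le_sum
    intro j hj
    have hlb : (2:ℝ)^τ ≤ nsup j ^ σ := by
      rw [hτdef, Real.rpow_mul two_pos.le]
      exact Real.rpow_le_rpow (by positivity) (nsup_lb hm1 hj) hσ.le
    exact div_le_div_of_nonneg_left (by positivity) (powpos τ) hlb
  -- (2) cA * W ≤ L * (E + cB * P)
  have h2 : cA * W ≤ L * (E + cB * P) := by
    have hterm : ∀ j ∈ B, cA * ‖u j‖ ^ p
        ≤ L * ((∑ x ∈ A, ‖u j - u x‖ ^ p) + P) := by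
      intro j _
      calc cA * ‖u j‖ ^ p = ∑ _x ∈ A, ‖u j‖ ^ p := by
            rw [Finset.sum_const, nsmul_eq_mul, hcAdef]
        _ ≤ ∑ x ∈ A, L * (‖u j - u x‖ ^ p + ‖u x‖ ^ p) :=
            Finset.sum_le_sum fun x _ => abs_rpow_triangle hp (u j) (u x)
        _ = L * ((∑ x ∈ A, ‖u j - u x‖ ^ p) + P) := by
            rw [← Finset.mul_sum, Finset.sum_add_distrib]
    calc cA * W = ∑ j ∈ B, cA * ‖u j‖ ^ p := Finset.mul_sum _ _ _
      _ ≤ ∑ j ∈ B, L * ((∑ x ∈ A, ‖u j - u x‖ ^ p) + P) :=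
          Finset.sum_le_sum hterm
      _ = L * (E + cB * P) := by
          rw [← Finset.mul_sum, Finset.sum_add_distrib, Finset.sum_const, nsmul_eq_mul, hEdef,
            hcBdef]
  -- (3) P ≤ 2^(aσ) * Sr a
  have h3 : P ≤ (2:ℝ)^((a:ℝ)*σ) * Sr d s p u a := by
    rw [Sr, Finset.mul_sum, hPdef]
    apply Finset.sum_le_sum
    intro x hx
    have hub : nsup x ^ σ ≤ (2:ℝ)^((a:ℝ)*σ) := by
      rw [Real.rpow_mul two_pos.le]
      exact Real.rpow_le_rpow (le_of_lt (nsup_pos ha hx)) (nsup_ub hx) hσ.le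
    have hpos : 0 < nsup x ^ σ := Real.rpow_pos_of_pos (nsup_pos ha hx) σ
    calc ‖u x‖ ^ p
        = ‖u x‖ ^ p / nsup x ^ σ * nsup x ^ σ := by
          rw [div_mul_cancel₀ _ hpos.ne']
      _ ≤ ‖u x‖ ^ p / nsup x ^ σ * (2:ℝ)^((a:ℝ)*σ) := by
          apply mul_le_mul_of_nonneg_left hub (by positivity)
      _ = (2:ℝ)^((a:ℝ)*σ) * (‖u x‖ ^ p / nsup x ^ σ) := by ring
  have hcB0 : 0 < cB := by rw [hcB]; positivity
  have hτpos := powpos τ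
  -- |σ - d| = σ - d
  have hadK : |σ - (d:ℝ)| = σ - (d:ℝ) := abs_of_pos (by linarith)
  have key : (2:ℝ)^σ * L * (2:ℝ)^((K:ℝ)*(d:ℝ) - (K:ℝ)*σ) ≤ 1/2 := by
    have h := hK
    rw [hadK] at h
    have e : (2:ℝ)^(σ+1) * L * (2:ℝ)^(-(K:ℝ)*(σ - (d:ℝ)))
        = 2 * ((2:ℝ)^σ * L * (2:ℝ)^((K:ℝ)*(d:ℝ) - (K:ℝ)*σ)) := by
      rw [Real.rpow_add two_pos, Real.rpow_one]
      rw [show -(K:ℝ)*(σ - (d:ℝ)) = (K:ℝ)*(d:ℝ) - (K:ℝ)*σ by ring]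
      ring
    rw [e] at h
    linarith
  have hX : (2:ℝ)^((m:ℝ)*(d:ℝ)) * (2:ℝ)^((a:ℝ)*σ)
      = (2:ℝ)^σ * (2:ℝ)^((K:ℝ)*(d:ℝ)-(K:ℝ)*σ) * ((2:ℝ)^((a:ℝ)*(d:ℝ)) * (2:ℝ)^τ) := by
    simp only [← Real.rpow_add two_pos]
    congr 1
    rw [hτdef, hmdef]
    push_cast
    ring
  have key2 : L * cB * (2:ℝ)^((a:ℝ)*σ) / (cA * (2:ℝ)^τ) ≤ 1/2 := by
    rw [div_le_iff₀ (mul_pos hcA0 hτpos), hcA, hcB]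
    calc L * ((2:ℝ)^((m:ℝ)*(d:ℝ)) * c) * (2:ℝ)^((a:ℝ)*σ)
        = ((2:ℝ)^σ * L * (2:ℝ)^((K:ℝ)*(d:ℝ)-(K:ℝ)*σ)) * ((2:ℝ)^((a:ℝ)*(d:ℝ)) * (2:ℝ)^τ * c) := by
          rw [show L * ((2:ℝ)^((m:ℝ)*(d:ℝ)) * c) * (2:ℝ)^((a:ℝ)*σ)
              = ((2:ℝ)^((m:ℝ)*(d:ℝ)) * (2:ℝ)^((a:ℝ)*σ)) * (L * c) by ring, hX]
          ring
      _ ≤ (1/2) * ((2:ℝ)^((a:ℝ)*(d:ℝ)) * (2:ℝ)^τ * c) := by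
          apply mul_le_mul_of_nonneg_right key
          have := powpos ((a:ℝ)*(d:ℝ))
          positivity
      _ = 1/2 * ((2:ℝ)^((a:ℝ)*(d:ℝ)) * c * (2:ℝ)^τ) := by ring
  have hDr : Dr d K s p u a = E / (2:ℝ)^μ := by
    rw [Dr, hEdef, hμdef]
    rw [Finset.sum_comm]
    simp only [← Finset.sum_div]
    congr 1
    refine Finset.sum_congr rfl fun x _ => Finset.sum_congr rfl fun j _ => ?_
    rw [norm_sub_rev]
  have e2 : (2:ℝ) * (2:ℝ)^μ
      = (2:ℝ)^(σ+1+(K:ℝ)*(d:ℝ)) * ((2:ℝ)^((a:ℝ)*(d:ℝ)) * (2:ℝ)^τ) := by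
    nth_rewrite 1 [← Real.rpow_one 2]
    simp only [← Real.rpow_add two_pos]
    congr 1
    rw [hμdef, hτdef, hmdef]
    push_cast
    ring
  have hcoef : L / (cA * (2:ℝ)^τ)
      = (2:ℝ)^(σ+1+(K:ℝ)*(d:ℝ)) * L / c / 2 / (2:ℝ)^μ := by
    rw [hcA, div_div, div_div]
    rw [div_eq_div_iff (mul_pos (mul_pos (powpos _) hc0) hτpos).ne'
      (mul_pos hc0 (mul_pos two_pos (powpos μ))).ne']
    linear_combination (L*c) * e2
  have h4 : W ≤ L * (E + cB * P) / cA := (le_div_iff₀ hcA0).mpr (by rw [mul_comm]; exact h2)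
  have h5 : Sr d s p u m ≤ L / (cA*(2:ℝ)^τ) * E + L * cB / (cA*(2:ℝ)^τ) * P := by
    refine h1.trans ?_
    have h45 : W / (2:ℝ)^τ ≤ (L * (E + cB*P)/cA) / (2:ℝ)^τ := (div_le_div_iff_of_pos_right hτpos).mpr h4
    refine h45.trans (le_of_eq ?_)
    field_simp
  have h6 : L * cB / (cA*(2:ℝ)^τ) * P ≤ 1/2 * Sr d s p u a := by
    calc L * cB / (cA*(2:ℝ)^τ) * P
        ≤ L * cB / (cA*(2:ℝ)^τ) * ((2:ℝ)^((a:ℝ)*σ) * Sr d s p u a) :=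
          mul_le_mul_of_nonneg_left h3
            (le_of_lt (div_pos (mul_pos hL0 hcB0) (mul_pos hcA0 hτpos)))
      _ = (L * cB * (2:ℝ)^((a:ℝ)*σ) / (cA*(2:ℝ)^τ)) * Sr d s p u a := by ring
      _ ≤ 1/2 * Sr d s p u a := mul_le_mul_of_nonneg_right key2 (Sr_nonneg _ _ _ _ _)
  have h7 : L / (cA*(2:ℝ)^τ) * E = (2:ℝ)^(σ+1+(K:ℝ)*(d:ℝ)) * L / c / 2 * Dr d K s p u a := by
    rw [hcoef, hDr]
    ring
  linarith [h5, h6, h7.le, h7.ge]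

lemma sum_step (d K : ℕ) (s p : ℝ) (hd : 0 < d) (hp : 0 < p) (hσ : 0 < s * p)
    (hdσ : (d:ℝ) < s * p)
    (hK : (2:ℝ) ^ (s*p + 1) * max ((2:ℝ)^(p-1)) 1 * (2:ℝ) ^ (-(K:ℝ) * |s*p - (d:ℝ)|) ≤ 1)
    (u : (Fin d → ℕ) → ℂ) (N : ℕ) :
    ∑ n ∈ Finset.range N, Sr d s p u (n+1+K) ≤
      (2:ℝ) ^ (s*p + 1 + (K:ℝ)*(d:ℝ)) * max ((2:ℝ)^(p-1)) 1 / (1 - (2:ℝ)^(-(d:ℝ)))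
        * ∑ n ∈ Finset.range N, Dr d K s p u (n+1)
      + ∑ n ∈ Finset.range K, Sr d s p u (n+1) := by
  set Cc := (2:ℝ)^(s*p+1+(K:ℝ)*(d:ℝ)) * max ((2:ℝ)^(p-1)) 1 / (1 - (2:ℝ)^(-(d:ℝ))) with hCc
  set T := ∑ n ∈ Finset.range N, Sr d s p u (n+1+K) with hT
  set D := ∑ n ∈ Finset.range N, Dr d K s p u (n+1) with hD
  set Tail := ∑ n ∈ Finset.range K, Sr d s p u (n+1) with hTail
  have hstep : T ≤ Cc/2 * D + 1/2 * ∑ n ∈ Finset.range N, Sr d s p u (n+1) := by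
    calc T ≤ ∑ n ∈ Finset.range N, (Cc/2 * Dr d K s p u (n+1) + 1/2 * Sr d s p u (n+1)) := by
          rw [hT]
          exact Finset.sum_le_sum fun n _ =>
            step d K s p hd hp hσ hdσ hK u (n+1) (Nat.le_add_left 1 n)
      _ = Cc/2 * D + 1/2 * ∑ n ∈ Finset.range N, Sr d s p u (n+1) := by
          rw [Finset.sum_add_distrib, ← Finset.mul_sum, ← Finset.mul_sum, hD]
  have hsplit : ∑ n ∈ Finset.range N, Sr d s p u (n+1) ≤ Tail + T := by
    rcases le_total N K with h | h
    · have h1 : ∑ n ∈ Finset.range N, Sr d s p u (n+1) ≤ Tail := by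
        rw [hTail]
        exact Finset.sum_le_sum_of_subset_of_nonneg (Finset.range_subset_range.2 h)
          (fun i _ _ => Sr_nonneg _ _ _ _ _)
      have hT0 : 0 ≤ T := Finset.sum_nonneg fun n _ => Sr_nonneg _ _ _ _ _
      linarith
    · have e1 : ∑ n ∈ Finset.range N, Sr d s p u (n+1)
          = Tail + ∑ n ∈ Finset.Ico K N, Sr d s p u (n+1) := by
        rw [hTail, Finset.range_eq_Ico, Finset.range_eq_Ico]
        exact (Finset.sum_Ico_consecutive (fun n => Sr d s p u (n+1)) (Nat.zero_le K) h).symm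
      have e2 : ∑ n ∈ Finset.Ico K N, Sr d s p u (n+1)
          = ∑ n ∈ Finset.range (N - K), Sr d s p u (K+n+1) :=
        Finset.sum_Ico_eq_sum_range _ K N
      have e3 : ∑ n ∈ Finset.range (N-K), Sr d s p u (K+n+1) ≤ T := by
        rw [hT]
        calc ∑ n ∈ Finset.range (N-K), Sr d s p u (K+n+1)
            = ∑ n ∈ Finset.range (N-K), Sr d s p u (n+1+K) :=
              Finset.sum_congr rfl fun n _ => by rw [show K+n+1 = n+1+K from by omega]
          _ ≤ ∑ n ∈ Finset.range N, Sr d s p u (n+1+K) :=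
              Finset.sum_le_sum_of_subset_of_nonneg (Finset.range_subset_range.2 (Nat.sub_le N K))
                (fun i _ _ => Sr_nonneg _ _ _ _ _)
      linarith
  linarith

lemma annF_disj (d : ℕ) : ∀ {a b : ℕ}, a < b → Disjoint (annF d a) (annF d b) := by
  intro a b h
  rw [Finset.disjoint_left]
  intro j hja hjb
  obtain ⟨_, h2a⟩ := (mem_annF j).1 hja
  obtain ⟨h1b, _⟩ := (mem_annF j).1 hjb
  have : (2:ℕ)^a ≤ 2^(b-1) := Nat.pow_le_pow_right two_pos (by omega)
  omega

lemma Ann_eq_annF (d k : ℕ) : Ann d k = ((annF d k : Finset (Fin d → ℕ)) : Set (Fin d → ℕ)) := by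
  ext j
  simp [Ann, mem_annF]

/-- Main lemma, case `sp > d`. -/
theorem main_lemma_sp_large (d K : ℕ) (s p : ℝ) (hd : 0 < d) (hs : 0 < s) (hp : 0 < p)
    (hspd : (d : ℝ) < s * p)
    (hK : (2 : ℝ) ^ (s * p + 1) * max ((2 : ℝ) ^ (p - 1)) 1 *
        (2 : ℝ) ^ (-(K : ℝ) * |s * p - (d : ℝ)|) ≤ 1) :
    ∀ u : (Fin d → ℕ) → ℂ,
      (∑' (j : {j : Fin d → ℕ // 2 ^ K ≤ Finset.univ.sup j}),
          ENNReal.ofReal (‖u j.1‖ ^ p / nsup j.1 ^ (s * p)))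
        ≤ ENNReal.ofReal
            ((2 : ℝ) ^ (s * p + 1 + (K : ℝ) * min (d : ℝ) (s * p)) *
              max ((2 : ℝ) ^ (p - 1)) 1 / (1 - (2 : ℝ) ^ (-(d : ℝ)))) *
          (∑' (n : ℕ) (j : Ann d (n + 1)) (m : Ann d (n + 1 + K)),
            ENNReal.ofReal (‖u j.1 - u m.1‖ ^ p /
              (2 : ℝ) ^ (((n + 1 + K : ℕ) : ℝ) * ((d : ℝ) + s * p)))) +
          ∑' (j : {j : Fin d → ℕ // 1 ≤ Finset.univ.sup j ∧ Finset.univ.sup j < 2 ^ K}),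
            ENNReal.ofReal (‖u j.1‖ ^ p / nsup j.1 ^ (s * p)) := by
  intro u
  rw [min_eq_left hspd.le]
  have hσ : 0 < s * p := lt_trans (by exact_mod_cast hd) hspd
  set F : (Fin d → ℕ) → ℝ≥0∞ :=
    fun j => ENNReal.ofReal (‖u j‖ ^ p / nsup j ^ (s * p)) with hF
  have hFnn : ∀ (t : Finset (Fin d → ℕ)), ∀ i ∈ t,
      0 ≤ ‖u i‖ ^ p / nsup i ^ (s * p) := fun t i _ =>
    div_nonneg (Real.rpow_nonneg (norm_nonneg _) _)
      (Real.rpow_nonneg (nsup_nonneg _) _)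
  -- covering of the LHS
  have cover : (∑' (j : {j : Fin d → ℕ // 2 ^ K ≤ Finset.univ.sup j}), F j.1)
      ≤ ∑' (n : ℕ), ENNReal.ofReal (Sr d s p u (n+1+K)) := by
    have sub : {j : Fin d → ℕ | 2^K ≤ Finset.univ.sup j}
        ⊆ ⋃ n : ℕ, ((annF d (n+1+K) : Finset (Fin d → ℕ)) : Set (Fin d → ℕ)) := by
      intro j hj
      simp only [Set.mem_setOf_eq] at hj
      have hj1 : 1 ≤ Finset.univ.sup j := le_trans Nat.one_le_two_pow hj
      set t := Nat.log 2 (Finset.univ.sup j) with ht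
      have h1 : 2^t ≤ Finset.univ.sup j := Nat.pow_log_le_self 2 (by omega)
      have h2 : Finset.univ.sup j < 2^(t+1) := Nat.lt_pow_succ_log_self one_lt_two _
      have hKt : K ≤ t := by
        have := (Nat.pow_lt_pow_iff_right one_lt_two).1 (lt_of_le_of_lt hj h2)
        omega
      refine Set.mem_iUnion.2 ⟨t - K, ?_⟩
      rw [Finset.mem_coe, mem_annF]
      constructor
      · rw [show t - K + 1 + K - 1 = t from by omega]; exact h1
      · rw [show t - K + 1 + K = t + 1 from by omega]; exact h2
    calc (∑' (j : {j : Fin d → ℕ // 2 ^ K ≤ Finset.univ.sup j}), F j.1)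
        ≤ ∑' (j : ↑(⋃ n : ℕ, ((annF d (n+1+K) : Finset (Fin d → ℕ)) : Set (Fin d → ℕ)))),
            F j.1 := ENNReal.tsum_mono_subtype F sub
      _ ≤ ∑' (n : ℕ) (j : ((annF d (n+1+K) : Finset (Fin d → ℕ)) : Set (Fin d → ℕ))), F j.1 :=
          ENNReal.tsum_iUnion_le_tsum F _
      _ = ∑' (n : ℕ), ENNReal.ofReal (Sr d s p u (n+1+K)) := by
          refine tsum_congr fun n => ?_
          rw [Finset.tsum_subtype' (annF d (n+1+K)) F, Sr,
            ENNReal.ofReal_sum_of_nonneg (hFnn _)]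
  -- the difference double sums
  have diff_eq : ∀ n : ℕ,
      (∑' (j : Ann d (n + 1)) (m : Ann d (n + 1 + K)),
        ENNReal.ofReal (‖u j.1 - u m.1‖ ^ p /
          (2 : ℝ) ^ (((n + 1 + K : ℕ) : ℝ) * ((d : ℝ) + s * p))))
      = ENNReal.ofReal (Dr d K s p u (n+1)) := by
    intro n
    have inner : ∀ j : Fin d → ℕ,
        (∑' (m : Ann d (n + 1 + K)),
          ENNReal.ofReal (‖u j - u m.1‖ ^ p /
            (2 : ℝ) ^ (((n + 1 + K : ℕ) : ℝ) * ((d : ℝ) + s * p))))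
        = ∑ m ∈ annF d (n+1+K),
            ENNReal.ofReal (‖u j - u m‖ ^ p /
              (2 : ℝ) ^ (((n + 1 + K : ℕ) : ℝ) * ((d : ℝ) + s * p))) := by
      intro j
      refine (tsum_congr_set_coe
        (fun m => ENNReal.ofReal (‖u j - u m‖ ^ p /
          (2 : ℝ) ^ (((n + 1 + K : ℕ) : ℝ) * ((d : ℝ) + s * p))))
        (Ann_eq_annF d (n+1+K))).trans ?_
      exact Finset.tsum_subtype' (annF d (n+1+K))
        (fun m => ENNReal.ofReal (‖u j - u m‖ ^ p /
          (2 : ℝ) ^ (((n + 1 + K : ℕ) : ℝ) * ((d : ℝ) + s * p))))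
    calc (∑' (j : Ann d (n + 1)) (m : Ann d (n + 1 + K)),
        ENNReal.ofReal (‖u j.1 - u m.1‖ ^ p /
          (2 : ℝ) ^ (((n + 1 + K : ℕ) : ℝ) * ((d : ℝ) + s * p))))
        = ∑ j ∈ annF d (n+1), ∑ m ∈ annF d (n+1+K),
            ENNReal.ofReal (‖u j - u m‖ ^ p /
              (2 : ℝ) ^ (((n + 1 + K : ℕ) : ℝ) * ((d : ℝ) + s * p))) := by
          refine (tsum_congr_set_coe
            (fun j => ∑' (m : Ann d (n + 1 + K)),
              ENNReal.ofReal (‖u j - u m.1‖ ^ p /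
                (2 : ℝ) ^ (((n + 1 + K : ℕ) : ℝ) * ((d : ℝ) + s * p))))
            (Ann_eq_annF d (n+1))).trans ?_
          refine (Finset.tsum_subtype' (annF d (n+1))
            (fun j => ∑' (m : Ann d (n + 1 + K)),
              ENNReal.ofReal (‖u j - u m.1‖ ^ p /
                (2 : ℝ) ^ (((n + 1 + K : ℕ) : ℝ) * ((d : ℝ) + s * p))))).trans ?_
          exact Finset.sum_congr rfl fun j _ => inner j
      _ = ENNReal.ofReal (Dr d K s p u (n+1)) := by
          rw [Dr, ENNReal.ofReal_sum_of_nonneg]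
          · refine Finset.sum_congr rfl fun j _ => ?_
            rw [ENNReal.ofReal_sum_of_nonneg]
            intro m _
            exact div_nonneg (Real.rpow_nonneg (norm_nonneg _) _)
              (Real.rpow_nonneg two_pos.le _)
          · intro j _
            exact Finset.sum_nonneg fun m _ =>
              div_nonneg (Real.rpow_nonneg (norm_nonneg _) _)
                (Real.rpow_nonneg two_pos.le _)
  -- tail estimate
  have tail_le : (ENNReal.ofReal (∑ n ∈ Finset.range K, Sr d s p u (n+1)))
      ≤ ∑' (j : {j : Fin d → ℕ // 1 ≤ Finset.univ.sup j ∧ Finset.univ.sup j < 2 ^ K}),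
          F j.1 := by
    classical
    have hdisj : (↑(Finset.range K) : Set ℕ).PairwiseDisjoint (fun n => annF d (n+1)) := by
      intro a _ b _ hab
      rcases Nat.lt_or_ge a b with h | h
      · exact annF_disj d (by omega)
      · exact (annF_disj d (by omega)).symm
    have hsub : (((Finset.range K).biUnion (fun n => annF d (n+1)) : Finset (Fin d → ℕ)) :
          Set (Fin d → ℕ))
        ⊆ {j : Fin d → ℕ | 1 ≤ Finset.univ.sup j ∧ Finset.univ.sup j < 2 ^ K} := by
      intro j hj
      rw [Finset.mem_coe, Finset.mem_biUnion] at hj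
      obtain ⟨n, hn, hjn⟩ := hj
      rw [Finset.mem_range] at hn
      obtain ⟨h1, h2⟩ := (mem_annF j).1 hjn
      constructor
      · exact le_trans Nat.one_le_two_pow h1
      · exact lt_of_lt_of_le h2 (Nat.pow_le_pow_right two_pos (by omega))
    calc ENNReal.ofReal (∑ n ∈ Finset.range K, Sr d s p u (n+1))
        = ∑ n ∈ Finset.range K, ∑ j ∈ annF d (n+1), F j := by
          rw [ENNReal.ofReal_sum_of_nonneg (fun n _ => Sr_nonneg _ _ _ _ _)]
          exact Finset.sum_congr rfl fun n _ => by
            rw [Sr, ENNReal.ofReal_sum_of_nonneg (hFnn _)]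
      _ = ∑ j ∈ (Finset.range K).biUnion (fun n => annF d (n+1)), F j :=
          (Finset.sum_biUnion hdisj).symm
      _ = ∑' (j : (((Finset.range K).biUnion (fun n => annF d (n+1)) : Finset (Fin d → ℕ)) :
            Set (Fin d → ℕ))), F j.1 :=
          (Finset.tsum_subtype' _ F).symm
      _ ≤ _ := ENNReal.tsum_mono_subtype F hsub
  -- assembling
  refine le_trans cover ?_
  rw [ENNReal.tsum_eq_iSup_nat]
  refine iSup_le fun N => ?_
  have hCc0 : 0 ≤ (2:ℝ) ^ (s*p + 1 + (K:ℝ)*(d:ℝ)) * max ((2:ℝ)^(p-1)) 1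
      / (1 - (2:ℝ)^(-(d:ℝ))) := by
    have h2d : (2:ℝ)^(-(d:ℝ)) < 1 :=
      Real.rpow_lt_one_of_one_lt_of_neg one_lt_two (neg_lt_zero.mpr (by exact_mod_cast hd))
    have h1 : (0:ℝ) < 1 - (2:ℝ)^(-(d:ℝ)) := by linarith
    have h2 : (0:ℝ) < max ((2:ℝ)^(p-1)) 1 := lt_of_lt_of_le one_pos (le_max_right _ _)
    positivity
  calc ∑ n ∈ Finset.range N, ENNReal.ofReal (Sr d s p u (n+1+K))
      = ENNReal.ofReal (∑ n ∈ Finset.range N, Sr d s p u (n+1+K)) :=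
        (ENNReal.ofReal_sum_of_nonneg (fun n _ => Sr_nonneg _ _ _ _ _)).symm
    _ ≤ ENNReal.ofReal ((2:ℝ) ^ (s*p + 1 + (K:ℝ)*(d:ℝ)) * max ((2:ℝ)^(p-1)) 1
          / (1 - (2:ℝ)^(-(d:ℝ))) * ∑ n ∈ Finset.range N, Dr d K s p u (n+1)
        + ∑ n ∈ Finset.range K, Sr d s p u (n+1)) :=
        ENNReal.ofReal_le_ofReal (sum_step d K s p hd hp hσ hspd hK u N)
    _ ≤ ENNReal.ofReal ((2:ℝ) ^ (s*p + 1 + (K:ℝ)*(d:ℝ)) * max ((2:ℝ)^(p-1)) 1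
          / (1 - (2:ℝ)^(-(d:ℝ))) * ∑ n ∈ Finset.range N, Dr d K s p u (n+1))
        + ENNReal.ofReal (∑ n ∈ Finset.range K, Sr d s p u (n+1)) :=
        ENNReal.ofReal_add_le
    _ ≤ _ := by
        refine add_le_add ?_ tail_le
        rw [ENNReal.ofReal_mul hCc0]
        refine mul_le_mul_right ?_ _
        rw [ENNReal.ofReal_sum_of_nonneg (fun n _ => Dr_nonneg _ _ _ _ _ _)]
        calc ∑ n ∈ Finset.range N, ENNReal.ofReal (Dr d K s p u (n+1))
            = ∑ n ∈ Finset.range N,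
                (∑' (j : Ann d (n + 1)) (m : Ann d (n + 1 + K)),
                  ENNReal.ofReal (‖u j.1 - u m.1‖ ^ p /
                    (2 : ℝ) ^ (((n + 1 + K : ℕ) : ℝ) * ((d : ℝ) + s * p)))) :=
              Finset.sum_congr rfl fun n _ => (diff_eq n).symm
          _ ≤ _ := ENNReal.sum_le_tsum _
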